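/- Let q be a prime power and let F(V,T) = (T+V)^{q+1} - 2(TV + (TV)^q) over F_{q^2}. For every fixed v ∈ F_{q^2} \ F_q, the equation F(v,t) = 0 has exactly q+1 distinct solutions t ∈ F_{q^2}. -/

import Mathlib

/-- For `F(V,T) = (T+V)^{q+1} - 2(TV + (TV)^q)` over `F_{q^2}` and any fixed
`v ∈ F_{q^2} \ F_q`, the equation `F(v,t) = 0` has exactly `q+1` solutions `t ∈ F_{q^2}`. -/
theorem F_vt_solution_count (q : ℕ) (hq : IsPrimePow q) (hodd : Odd q)
    (K : Type*) [Field K] [Fintype K] (hK : Fintype.card K = q ^ 2)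
    (v : K) (hv : v ^ q ≠ v) :
    {t : K | (t + v) ^ (q + 1) - 2 * (t * v + (t * v) ^ q) = 0}.ncard = q + 1 := by
  classical
  obtain ⟨p, k, hp, hk, hpk⟩ := hq
  have hp' : p.Prime := Nat.prime_iff.mpr hp
  haveI := Fact.mk hp'
  -- characteristic of K is p
  obtain ⟨r, hr⟩ := CharP.exists K
  haveI := hr
  have hr' : r.Prime := CharP.char_is_prime K r
  obtain ⟨n, -, hcard⟩ := FiniteField.card K r
  have hrp : r = p := by
    have h1 : r ∣ q ^ 2 := by
      rw [← hK, hcard]; exact dvd_pow_self r (by positivity)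
    rw [← hpk] at h1
    have h2 : r ∣ p := hr'.dvd_of_dvd_pow (hr'.dvd_of_dvd_pow h1)
    exact (Nat.prime_dvd_prime_iff_eq hr' hp').mp h2
  haveI : CharP K p := hrp ▸ hr
  -- basic Frobenius facts
  have hfrob : ∀ x y : K, (x + y) ^ q = x ^ q + y ^ q := by
    intro x y; rw [← hpk]; exact add_pow_char_pow x y p k
  have hsub : ∀ x y : K, (x - y) ^ q = x ^ q - y ^ q := by
    intro x y; rw [← hpk]; exact sub_pow_char_pow x y k
  have hq2 : ∀ x : K, (x ^ q) ^ q = x := by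
    intro x
    rw [← pow_mul, ← sq, ← hK, FiniteField.pow_card]
  have hq1 : 1 ≤ q := hodd.pos
  have hqne2 : p ≠ 2 := by
    intro h
    subst h
    have hev : Even q := by
      rw [← hpk]; exact (Nat.even_pow).mpr ⟨even_two, hk.ne'⟩
    exact (Nat.not_odd_iff_even.mpr hev) hodd
  have two_ne : (2 : K) ≠ 0 := by
    have h2 : ((2 : ℕ) : K) ≠ 0 := by
      rw [Ne, CharP.cast_eq_zero_iff K p 2]
      intro h
      exact hqne2 ((Nat.prime_dvd_prime_iff_eq hp' Nat.prime_two).mp h)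
    simpa using h2
  have two_ne_one : (2 : K) ≠ 1 := by
    intro h
    exact one_ne_zero (by linear_combination h : (1 : K) = 0)
  have htwo_pow : (2 : K) ^ q = 2 := by
    have h := hfrob 1 1
    rw [one_pow, one_add_one_eq_two] at h
    exact h
  have htwo_q1 : (2 : K) ^ (q - 1) = 1 := by
    have h1 : (2 : K) ^ (q - 1) * 2 = 2 := by
      rw [← pow_succ, Nat.sub_add_cancel hq1, htwo_pow]
    exact mul_right_cancel₀ two_ne (by rw [h1, one_mul])
  set d : K := v ^ q - v with hd_def
  have hd0 : d ≠ 0 := sub_ne_zero.mpr hv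
  have hdq : d ^ q = -d := by
    rw [hd_def, hsub, hq2]; ring
  -- structural identity for F
  have hFs : ∀ t : K, (t + v) ^ (q + 1) - 2 * (t * v + (t * v) ^ q)
      = (t - v ^ q) * ((t - v ^ q) ^ q) - d * ((t - v ^ q) ^ q) + d * (t - v ^ q) + d ^ 2 := by
    intro t
    have h1 : (t - v ^ q) ^ q = t ^ q - v := by rw [hsub, hq2]
    rw [pow_succ, hfrob, h1, mul_pow, hd_def]
    ring
  have hne1 : ∀ w : K, w ^ (q + 1) = 2 → w - 1 ≠ 0 := by
    intro w hw h
    rw [sub_eq_zero] at h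
    rw [h, one_pow] at hw
    exact two_ne_one hw.symm
  -- the solution set as an image
  have hset : {t : K | (t + v) ^ (q + 1) - 2 * (t * v + (t * v) ^ q) = 0}
      = (fun w : K => v ^ q + d / (w - 1)) '' {w : K | w ^ (q + 1) = 2} := by
    ext t
    simp only [Set.mem_setOf_eq, Set.mem_image]
    constructor
    · intro ht
      rw [hFs t] at ht
      set s : K := t - v ^ q with hs_def
      have hs0 : s ≠ 0 := by
        intro h
        rw [h, zero_pow (by omega : q ≠ 0)] at ht
        simp only [mul_zero, zero_mul, zero_sub, mul_zero, neg_zero, zero_add] at ht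
        exact pow_ne_zero 2 hd0 ht
      have hsq0 : s ^ q ≠ 0 := pow_ne_zero q hs0
      refine ⟨1 + d / s, ?_, ?_⟩
      · rw [pow_succ, hfrob, one_pow, div_pow, hdq, neg_div]
        field_simp
        linear_combination (-1 : K) * ht
      · have h1 : (1 : K) + d / s - 1 = d / s := by ring
        rw [h1]
        have h2 : d / (d / s) = s := by
          rw [div_div_eq_mul_div, mul_comm, mul_div_assoc, div_self hd0, mul_one]
        rw [h2, hs_def]
        ring
    · rintro ⟨w, hw, rfl⟩
      have hw0 : w ≠ 0 := by
        intro h; rw [h, zero_pow (by omega : q + 1 ≠ 0)] at hw; exact two_ne hw.symm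
      have hw1 : w - 1 ≠ 0 := hne1 w hw
      have hwq : w ^ q = 2 / w := by
        field_simp
        rw [← pow_succ]; exact hw
      have hw2 : 2 - w ≠ 0 := by
        intro h
        rw [sub_eq_zero] at h
        rw [← h] at hw
        have h3 : (2 : K) ^ q * 2 = 2 := by rw [← pow_succ]; exact hw
        rw [htwo_pow] at h3
        exact two_ne_one (mul_left_cancel₀ two_ne (by rw [h3, mul_one]))
      rw [hFs]
      have hs : v ^ q + d / (w - 1) - v ^ q = d / (w - 1) := by ring
      rw [hs]
      have hsq : (d / (w - 1)) ^ q = -d / (2 / w - 1) := by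
        rw [div_pow, hdq, hsub, one_pow, hwq]
      rw [hsq]
      have hden : 2 / w - 1 ≠ 0 := by
        rw [div_sub_one hw0]
        exact div_ne_zero hw2 hw0
      field_simp
      ring
  rw [hset]
  rw [Set.ncard_image_of_injOn]
  swap
  · intro w1 h1 w2 h2 heq
    simp only [Set.mem_setOf_eq] at h1 h2
    have e1 := hne1 w1 h1
    have e2 := hne1 w2 h2
    have h3 : d / (w1 - 1) = d / (w2 - 1) := by
      have := heq
      simpa using this
    rw [div_eq_div_iff e1 e2] at h3
    have h4 : w2 - 1 = w1 - 1 := mul_left_cancel₀ hd0 h3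
    have h5 : w2 = w1 := by linear_combination h4
    exact h5.symm
  -- now count {w | w^(q+1) = 2}
  -- generator of Kˣ
  obtain ⟨g, hg⟩ := IsCyclic.exists_generator (α := Kˣ)
  have hcardU : Fintype.card Kˣ = q ^ 2 - 1 := by rw [Fintype.card_units, hK]
  have horder : orderOf g = q ^ 2 - 1 := by
    rw [orderOf_eq_card_of_forall_mem_zpowers hg, Nat.card_eq_fintype_card, hcardU]
  have hfact : q ^ 2 - 1 = (q + 1) * (q - 1) := by
    have h1 : 1 ≤ q ^ 2 := Nat.one_le_pow _ _ (by omega)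
    zify [h1, hq1]
    ring
  set u2 : Kˣ := Units.mk0 2 two_ne with hu2
  obtain ⟨m, hm⟩ := (Submonoid.mem_powers_iff u2 g).mp (mem_powers_iff_mem_zpowers.mpr (hg u2))
  have hu2pow : u2 ^ (q - 1) = 1 := by
    ext
    push_cast
    exact htwo_q1
  have hdvd : (q + 1) * (q - 1) ∣ m * (q - 1) := by
    rw [← hfact, ← horder]
    apply orderOf_dvd_of_pow_eq_one
    rw [pow_mul, hm, hu2pow]
  have hq1pos : 0 < q - 1 := by
    have := hp'.two_le
    have hq3 : 2 ≤ q := by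
      calc 2 ≤ p := hp'.two_le
      _ ≤ p ^ k := Nat.le_self_pow hk.ne' p
      _ = q := hpk
    omega
  have hdvd2 : (q + 1) ∣ m := by
    rcases hdvd with ⟨c, hc⟩
    refine ⟨c, ?_⟩
    have : m * (q - 1) = ((q + 1) * c) * (q - 1) := by rw [hc]; ring
    exact Nat.eq_of_mul_eq_mul_right hq1pos this
  -- w0 : solution of w^(q+1) = 2
  set w0u : Kˣ := g ^ (m / (q + 1)) with hw0u
  have hw0pow : w0u ^ (q + 1) = u2 := by
    rw [hw0u, ← pow_mul, Nat.div_mul_cancel hdvd2, hm]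
  have hw0K : ((w0u : K)) ^ (q + 1) = 2 := by
    have := congrArg (Units.val) hw0pow
    push_cast at this
    simpa [hu2] using this
  have hw0ne : (w0u : K) ≠ 0 := Units.ne_zero _
  -- primitive (q+1)-st root of unity
  set ζu : Kˣ := g ^ (q - 1) with hζu
  have hordζ : orderOf ζu = q + 1 := by
    rw [hζu, orderOf_pow, horder, hfact, Nat.gcd_eq_right ⟨q + 1, by ring⟩,
      Nat.mul_div_cancel _ hq1pos]
  have hζprim : IsPrimitiveRoot ((ζu : K)) (q + 1) := by
    rw [IsPrimitiveRoot.coe_units_iff]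
    exact hordζ ▸ IsPrimitiveRoot.orderOf ζu
  have hroots : {x : K | x ^ (q + 1) = 1} = ↑(Polynomial.nthRootsFinset (q + 1) (1 : K)) := by
    ext x
    simp [Polynomial.mem_nthRootsFinset (Nat.succ_pos q) (1 : K)]
  have hS : {w : K | w ^ (q + 1) = 2} = (fun x : K => (w0u : K) * x) '' {x : K | x ^ (q + 1) = 1} := by
    ext w
    simp only [Set.mem_setOf_eq, Set.mem_image]
    constructor
    · intro hw
      refine ⟨w / (w0u : K), ?_, by field_simp⟩
      rw [div_pow, hw, hw0K, div_self two_ne]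
    · rintro ⟨x, hx, rfl⟩
      rw [mul_pow, hw0K, hx, mul_one]
  rw [hS, Set.ncard_image_of_injective _ (mul_right_injective₀ hw0ne), hroots,
    Set.ncard_coe_finset, hζprim.card_nthRootsFinset]
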